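/- arXiv:2002.10654 — 2 statements merged into one kernel-verified Lean document; each statement's English description precedes it below -/
import Mathlib

section
/- Let Σ be a finite alphabet, D0 and D1 probability distributions on Σ^n, and T a deterministic decision tree on Σ^n with boolean output (accept/reject). Suppose T accepts x ∼ D0 with probability at most δ0 and accepts x ∼ D1 with probability at least 1−δ1. Then for every M > 0, T is a (M·δ0 + δ1, M)-likelihood booster for D0, D1; that is, the probability that x ∼ D1 reaches a leaf ℓ with D1(Input(ℓ)) < M · D0(Input(ℓ)) is at most M·δ0 + δ1. -/
open Finset

/-- A deterministic decision tree over alphabet `α`, querying positions `ι`,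
with output labels `β`.  A `node i ch` queries position `i` and has one child per symbol. -/
inductive DTree (α ι β : Type) : Type where
  | leaf : β → DTree α ι β
  | node : ι → (α → DTree α ι β) → DTree α ι β

namespace DTree

/-- The output of the tree on input `x`. -/
def eval {α ι β : Type} : DTree α ι β → (ι → α) → β
  | .leaf b, _ => b
  | .node i ch, x => (ch (x i)).eval x

/-- The depth of a tree: the maximum number of queries along any root-to-leaf path. -/
def depth {α ι β : Type} [Fintype α] : DTree α ι β → ℕ
  | .leaf _ => 0
  | .node _ ch => 1 + Finset.univ.sup fun a => (ch a).depth

/-- `Input(ℓ)` for the leaf `ℓ` reached by `x`: the set of inputs that follow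
the same root-to-leaf path as `x`. -/
def reach {α ι β : Type} : DTree α ι β → (ι → α) → Set (ι → α)
  | .leaf _, _ => Set.univ
  | .node i ch, x => {y | y i = x i} ∩ (ch (x i)).reach x

/-- For a tree on `k` samples, the set `ℓ_j ⊆ Σ^n` of strings consistent with the
queries made to the `j`-th sample on the path followed by input `x`. -/
def reachJ {α β : Type} {k n : ℕ} :
    DTree α (Fin k × Fin n) β → ((Fin k × Fin n) → α) → Fin k → Set (Fin n → α)
  | .leaf _, _, _ => Set.univ
  | .node p ch, x, j =>
      (if p.1 = j then {y : Fin n → α | y p.2 = x p} else Set.univ) ∩ (ch (x p)).reachJ x j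

end DTree

/-- Probability mass of a set `S` under (the mass function of) a distribution `D`. -/
noncomputable def prS {γ : Type} [Fintype γ] (D : γ → ℝ) (S : Set γ) : ℝ :=
  ∑ x, S.indicator D x

/-- `D` is a probability mass function on the finite type `γ`. -/
def IsDist {γ : Type} [Fintype γ] (D : γ → ℝ) : Prop :=
  (∀ x, 0 ≤ D x) ∧ ∑ x, D x = 1

/-- Likelihood ratio `LR(S) = D1(S)/D0(S)`. -/
noncomputable def LR {γ : Type} [Fintype γ] (D0 D1 : γ → ℝ) (S : Set γ) : ℝ :=
  prS D1 S / prS D0 S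

/-- The `k`-fold product distribution `D^k` on `k` samples (input flattened). -/
noncomputable def prodD {α : Type} {n k : ℕ} (D : (Fin n → α) → ℝ) :
    ((Fin k × Fin n) → α) → ℝ :=
  fun x => ∏ j, D fun i => x (j, i)

/-- `T` is a `(δ, M)`-likelihood booster for `D0, D1`. -/
def LBooster {α β : Type} [Fintype α] {n : ℕ}
    (D0 D1 : (Fin n → α) → ℝ) (δ M : ℝ) (T : DTree α (Fin n) β) : Prop :=
  1 - δ ≤ prS D1 {x | M ≤ LR D0 D1 (T.reach x)}

/-- `T` is a `(δ, M)`-overall likelihood booster for `D0^k, D1^k`. -/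
def OBooster {α β : Type} [Fintype α] {n k : ℕ}
    (D0 D1 : (Fin n → α) → ℝ) (δ M : ℝ) (T : DTree α (Fin k × Fin n) β) : Prop :=
  1 - δ ≤ prS (prodD D1) {x | M ≤ ∏ j, LR D0 D1 (T.reachJ x j)}

open scoped Classical in
/-- `T` is a `(δ, ε, M)`-uniform likelihood booster for `D0^k, D1^k`. -/
def UBooster {α β : Type} [Fintype α] {n k : ℕ}
    (D0 D1 : (Fin n → α) → ℝ) (δ ε M : ℝ) (T : DTree α (Fin k × Fin n) β) : Prop :=
  1 - δ ≤ prS (prodD D1)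
    {x | (1 - ε) * k ≤ ((Finset.univ.filter fun j => M ≤ LR D0 D1 (T.reachJ x j)).card : ℝ)}

/-- `D = ½D0 + ½D1` is a balanced input distribution for the partial function `f`:
`D_b` is a distribution supported on `f⁻¹(b)`. -/
def BalancedDist {n : ℕ} (f : (Fin n → Bool) → Option Bool) (D0 D1 : (Fin n → Bool) → ℝ) : Prop :=
  IsDist D0 ∧ IsDist D1 ∧ (∀ x, D0 x ≠ 0 → f x = some false) ∧ ∀ x, D1 x ≠ 0 → f x = some true

/-- `corr_ε(f, D)`: the minimum over `k ≥ 1` of the least depth of a deterministic decision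
tree on `k` samples which, for a uniformly random `b`, on input drawn from `D_b^k`
outputs `b` with probability at least `1 - ε`. -/
noncomputable def corrC {n : ℕ} (ε : ℝ) (D0 D1 : (Fin n → Bool) → ℝ) : ℕ :=
  sInf {q | ∃ k, 0 < k ∧ ∃ T : DTree Bool (Fin k × Fin n) Bool, T.depth ≤ q ∧
    1 - ε ≤ (prS (prodD D0) {x | T.eval x = false} + prS (prodD D1) {x | T.eval x = true}) / 2}

/-- `sel_ε(f, D)`: the minimum over `k ≥ 1` of the least depth of a deterministic decision
tree on `k` samples from `D` outputting a pair `(i, f(xⁱ))` with probability at least `1 - ε`. -/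
noncomputable def selC {n : ℕ} (ε : ℝ) (f : (Fin n → Bool) → Option Bool)
    (D : (Fin n → Bool) → ℝ) : ℕ :=
  sInf {q | ∃ k, 0 < k ∧ ∃ T : DTree Bool (Fin k × Fin n) (Fin k × Bool), T.depth ≤ q ∧
    1 - ε ≤ prS (prodD D) {x | f (fun i => x ((T.eval x).1, i)) = some (T.eval x).2}}

/-- The product distribution `D_{ab}^k = (Da × Db)^k` on `k` pairs of samples. -/
noncomputable def prodD2 {n k : ℕ} (Da Db : (Fin n → Bool) → ℝ) :
    ((Fin k × Fin 2 × Fin n) → Bool) → ℝ :=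
  fun x => ∏ j, (Da fun i => x (j, 0, i)) * Db fun i => x (j, 1, i)

/-- `bicorr_ε(f, D)`: minimum over `k ≥ 1` of the least depth of a deterministic decision tree
that distinguishes `D_{01}^k` (output `false`) from `D_{10}^k` (output `true`) with
probability at least `1 - ε` for a uniformly random choice between the two. -/
noncomputable def bicorrC {n : ℕ} (ε : ℝ) (D0 D1 : (Fin n → Bool) → ℝ) : ℕ :=
  sInf {q | ∃ k, 0 < k ∧ ∃ T : DTree Bool (Fin k × Fin 2 × Fin n) Bool, T.depth ≤ q ∧
    1 - ε ≤ (prS (prodD2 D0 D1) {x | T.eval x = false} +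
             prS (prodD2 D1 D0) {x | T.eval x = true}) / 2}

/-- `R_ε(f)`: randomized query complexity, i.e. the least `q` such that some probability
distribution over deterministic decision trees of depth at most `q` outputs `f x`
with probability at least `1 - ε` for every `x` in the domain of `f`. -/
noncomputable def Rq {ι : Type} (ε : ℝ) (f : (ι → Bool) → Option Bool) : ℕ :=
  sInf {q | ∃ (p : ℕ → ℝ) (Ts : ℕ → DTree Bool ι Bool),
    (∀ i, 0 ≤ p i) ∧ (∑' i, p i) = 1 ∧ (∀ i, (Ts i).depth ≤ q) ∧
    ∀ x b, f x = some b → 1 - ε ≤ ∑' i, if (Ts i).eval x = b then p i else 0}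

/-- `corr_ε(f)`: the maximum of `corr_ε(f, D)` over balanced input distributions `D` for `f`. -/
noncomputable def corrMax {n : ℕ} (ε : ℝ) (f : (Fin n → Bool) → Option Bool) : ℕ :=
  sSup {q | ∃ D0 D1, BalancedDist f D0 D1 ∧ q = corrC ε D0 D1}

/-- `sel_ε(f)`: the maximum of `sel_ε(f, D)` over balanced input distributions `D` for `f`. -/
noncomputable def selMax {n : ℕ} (ε : ℝ) (f : (Fin n → Bool) → Option Bool) : ℕ :=
  sSup {q | ∃ D0 D1, BalancedDist f D0 D1 ∧ q = selC ε f fun x => (D0 x + D1 x) / 2}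
/-- The parity (XOR) of all bits of `x`. -/
def XORn {n : ℕ} (x : Fin n → Bool) : Bool :=
  decide ((Finset.univ.filter fun i => x i = true).card % 2 = 1)

/-- The parity of the bits of `x` in positions `≥ 2`. -/
def XORtail {n : ℕ} (x : Fin n → Bool) : Bool :=
  decide ((Finset.univ.filter fun i : Fin n => 2 ≤ (i : ℕ) ∧ x i = true).card % 2 = 1)

/-- `x` with the bits in block `B` flipped. -/
def flipB {n : ℕ} (x : Fin n → Bool) (B : Finset (Fin n)) : Fin n → Bool :=
  fun i => if i ∈ B then !(x i) else x i

/-- `B` is a sensitive block of `f` on `x`: `x^B` lies in the domain of `f` and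
`f(x^B) ≠ f(x)`. -/
def SensBlock {n : ℕ} (f : (Fin n → Bool) → Option Bool) (x : Fin n → Bool)
    (B : Finset (Fin n)) : Prop :=
  (f (flipB x B)).isSome ∧ f (flipB x B) ≠ f x

/-- Fractional block sensitivity `fbs(f) = max_x fbs(f, x)`, where `fbs(f,x)` is the value
of the fractional packing LP over the sensitive blocks of `x`. -/
noncomputable def fbs {n : ℕ} (f : (Fin n → Bool) → Option Bool) : ℝ :=
  sSup {r | ∃ x, (f x).isSome ∧ ∃ w : Finset (Fin n) → ℝ,
    (∀ B, 0 ≤ w B) ∧ (∀ B, w B ≤ 1) ∧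
    (∀ B, w B ≠ 0 → SensBlock f x B) ∧
    (∀ i, ∑ B ∈ Finset.univ.filter (fun B => i ∈ B), w B ≤ 1) ∧
    r = ∑ B, w B}

/-- The composed partial function `f ∘ g`, defined on `(x¹, …, xⁿ)` when every `xⁱ` is in
the domain of `g`, with value `f(g(x¹), …, g(xⁿ))`. -/
def compFG {n m : ℕ} (f : (Fin n → Bool) → Option Bool) (g : (Fin m → Bool) → Option Bool) :
    ((Fin n × Fin m) → Bool) → Option Bool :=
  fun x =>
    if h : ∀ i, (g fun s => x (i, s)).isSome then
      f fun i => (g fun s => x (i, s)).get (h i)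
    else none

/-- Number of queries that `T` makes into block `B` on input `x` (each query reads one bit
`(i, s)`, and counts if `i ∈ B`). -/
def countQ {m n : ℕ} {β : Type} (B : Finset (Fin n)) :
    DTree Bool (Fin n × Fin m) β → ((Fin n × Fin m) → Bool) → ℕ
  | .leaf _, _ => 0
  | .node p ch, x => (if p.1 ∈ B then 1 else 0) + countQ B (ch (x p)) x

/-- The Shaltiel distribution for `XOR_n`, `n = m + 2`: with probability 99/100 output `0`
followed by `n-1` uniform bits; with probability 1/100 output `1`, one uniform bit, `0^{n-2}`. -/
noncomputable def D16 (m : ℕ) : (Fin (m + 2) → Bool) → ℝ := fun x =>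
  (if x 0 = false then (99 / 100) * ((1:ℝ) / 2) ^ (m + 1) else 0) +
  (if x 0 = true ∧ (∀ i : Fin (m + 2), 2 ≤ (i : ℕ) → x i = false) then 1 / 200 else 0)

/-- The distribution of Theorem 2 for `XOR_n`, `n = m + 3`: sample `z` uniform on `n-2` bits,
`a := XOR(z)`, `b` uniform; output `a a z` w.p. 1/100 and `b b z` w.p. 99/100. -/
noncomputable def D34 (m : ℕ) : (Fin (m + 3) → Bool) → ℝ := fun x =>
  if x 0 = x 1 then
    ((1:ℝ) / 2) ^ (m + 1) * (99 / 200 + if x 0 = XORtail x then 1 / 100 else 0)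
  else 0

/-- A distribution conditioned on `XORn x = b` (for distributions giving each value
probability 1/2). -/
noncomputable def condXOR {n : ℕ} (D : (Fin n → Bool) → ℝ) (b : Bool) : (Fin n → Bool) → ℝ :=
  fun x => if XORn x = b then 2 * D x else 0


namespace DTree
lemma mem_reach_self {α ι β : Type} (T : DTree α ι β) (x : ι → α) : x ∈ T.reach x := by
  induction T with
  | leaf b => simp [reach]
  | node i ch ih => exact ⟨rfl, ih _⟩

lemma reach_eq_of_mem {α ι β : Type} (T : DTree α ι β) (x y : ι → α)
    (h : y ∈ T.reach x) : T.reach y = T.reach x := by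
  induction T with
  | leaf b => rfl
  | node i ch ih =>
    obtain ⟨h1, h2⟩ := h
    show {z | z i = y i} ∩ (ch (y i)).reach y = _
    rw [show y i = x i from h1, ih (x i) h2]; rfl

lemma eval_eq_of_mem {α ι β : Type} (T : DTree α ι β) (x y : ι → α)
    (h : y ∈ T.reach x) : T.eval y = T.eval x := by
  induction T with
  | leaf b => rfl
  | node i ch ih =>
    obtain ⟨h1, h2⟩ := h
    show (ch (y i)).eval y = _
    rw [show y i = x i from h1]; exact ih (x i) h2
end DTree

lemma prS_eq_sum_filter {γ : Type} [Fintype γ] (D : γ → ℝ) (S : Set γ)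
    [DecidablePred (· ∈ S)] :
    prS D S = ∑ x ∈ Finset.univ.filter (· ∈ S), D x := by
  classical
  rw [prS]
  rw [Finset.sum_filter]
  congr 1; ext x
  by_cases h : x ∈ S <;> simp [Set.indicator_apply, h]

open Classical in
lemma key_booster {α : Type} [Fintype α] {n : ℕ}
    (D0 D1 : (Fin n → α) → ℝ) (hn0 : ∀ x, 0 ≤ D0 x) (hn1 : ∀ x, 0 ≤ D1 x)
    (T : DTree α (Fin n) Bool) (M : ℝ) (hM : 0 ≤ M) :
    prS D1 {x | prS D1 (T.reach x) < M * prS D0 (T.reach x) ∧ T.eval x = true}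
      ≤ M * prS D0 {x | T.eval x = true} := by
  classical
  set P : (Fin n → α) → Prop := fun x =>
    prS D1 (T.reach x) < M * prS D0 (T.reach x) ∧ T.eval x = true with hP
  set A : Finset (Fin n → α) := Finset.univ.filter P with hA
  set img : Finset (Set (Fin n → α)) := A.image (fun x => T.reach x) with himg
  set F : Set (Fin n → α) → Finset (Fin n → α) :=
    fun s => Finset.univ.filter (· ∈ s) with hF
  have hfib : ∑ s ∈ img, ∑ x ∈ A.filter (fun x => T.reach x = s), D1 x = ∑ x ∈ A, D1 x :=
    Finset.sum_fiberwise_of_maps_to (fun x hx => Finset.mem_image_of_mem _ hx) D1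
  have hLHS : prS D1 {x | P x} = ∑ x ∈ A, D1 x := by
    rw [prS_eq_sum_filter]
    refine Finset.sum_congr ?_ (fun _ _ => rfl)
    ext z; simp [hA, Set.mem_setOf_eq]
  have hstep : ∀ s ∈ img, ∑ x ∈ A.filter (fun x => T.reach x = s), D1 x
      ≤ M * ∑ y ∈ F s, D0 y := by
    intro s hs
    obtain ⟨x, hxA, hxs⟩ := Finset.mem_image.mp hs
    have hPx : P x := (Finset.mem_filter.mp hxA).2
    have hsub : A.filter (fun z => T.reach z = s) ⊆ F s := by
      intro z hz
      have hz' := (Finset.mem_filter.mp hz).2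
      exact Finset.mem_filter.mpr ⟨Finset.mem_univ _, hz' ▸ T.mem_reach_self z⟩
    have h1 : ∑ x ∈ A.filter (fun x => T.reach x = s), D1 x ≤ ∑ y ∈ F s, D1 y :=
      Finset.sum_le_sum_of_subset_of_nonneg hsub (fun y _ _ => hn1 y)
    have h2 : ∑ y ∈ F s, D1 y = prS D1 s := (prS_eq_sum_filter D1 s).symm
    have h3 : ∑ y ∈ F s, D0 y = prS D0 s := (prS_eq_sum_filter D0 s).symm
    calc ∑ x ∈ A.filter (fun x => T.reach x = s), D1 x ≤ prS D1 s := h2 ▸ h1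
      _ ≤ M * prS D0 s := by rw [← hxs]; exact le_of_lt hPx.1
      _ = M * ∑ y ∈ F s, D0 y := by rw [h3]
  have hdisj : (img : Set (Set (Fin n → α))).PairwiseDisjoint F := by
    intro s hs t ht hst
    refine Finset.disjoint_left.mpr fun y hys hyt => hst ?_
    have hys' : y ∈ s := (Finset.mem_filter.mp hys).2
    have hyt' : y ∈ t := (Finset.mem_filter.mp hyt).2
    obtain ⟨x, hxA, hxs⟩ := Finset.mem_image.mp hs
    obtain ⟨x', hxA', hxt⟩ := Finset.mem_image.mp ht
    have e1 : T.reach y = s := hxs ▸ T.reach_eq_of_mem x y (hxs ▸ hys')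
    have e2 : T.reach y = t := hxt ▸ T.reach_eq_of_mem x' y (hxt ▸ hyt')
    rw [← e1, e2]
  have hbi : ∑ s ∈ img, ∑ y ∈ F s, D0 y = ∑ y ∈ img.biUnion F, D0 y :=
    (Finset.sum_biUnion hdisj).symm
  calc prS D1 {x | P x} = ∑ s ∈ img, ∑ x ∈ A.filter (fun x => T.reach x = s), D1 x := by
        rw [hLHS, hfib]
    _ ≤ ∑ s ∈ img, M * ∑ y ∈ F s, D0 y := Finset.sum_le_sum hstep
    _ = M * ∑ y ∈ img.biUnion F, D0 y := by rw [← Finset.mul_sum, hbi]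
    _ ≤ M * prS D0 {x | T.eval x = true} := ?_
  rw [prS_eq_sum_filter]
  refine mul_le_mul_of_nonneg_left
    (Finset.sum_le_sum_of_subset_of_nonneg ?_ fun y _ _ => hn0 y) hM
  intro y hy
  obtain ⟨s, hs, hys⟩ := Finset.mem_biUnion.mp hy
  obtain ⟨x, hxA, hxs⟩ := Finset.mem_image.mp hs
  have hPx : P x := (Finset.mem_filter.mp hxA).2
  have hys' : y ∈ T.reach x := hxs ▸ (Finset.mem_filter.mp hys).2
  have he : T.eval y = T.eval x := T.eval_eq_of_mem x y hys'
  exact Finset.mem_filter.mpr ⟨Finset.mem_univ _,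
    show y ∈ {x | T.eval x = true} from he.trans hPx.2⟩

/-- If `T` accepts `x ∼ D0` with probability at most `δ0` and accepts
`x ∼ D1` with probability at least `1 − δ1`, then for every `M > 0` the probability that
`x ∼ D1` reaches a leaf `ℓ` with `D1(Input(ℓ)) < M·D0(Input(ℓ))` is at most `M·δ0 + δ1`. -/
theorem query_to_booster {α : Type} [Fintype α] {n : ℕ}
    (D0 D1 : (Fin n → α) → ℝ) (hD0 : IsDist D0) (hD1 : IsDist D1)
    (T : DTree α (Fin n) Bool) (δ0 δ1 : ℝ)
    (h0 : prS D0 {x | T.eval x = true} ≤ δ0)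
    (h1 : 1 - δ1 ≤ prS D1 {x | T.eval x = true}) :
    ∀ M : ℝ, 0 < M →
      prS D1 {x | prS D1 (T.reach x) < M * prS D0 (T.reach x)} ≤ M * δ0 + δ1 := by
    classical
  intro M hM
  obtain ⟨hn0, hs0⟩ := hD0
  obtain ⟨hn1, hs1⟩ := hD1
  -- split into accept/reject parts
  have hsplit : prS D1 {x | prS D1 (T.reach x) < M * prS D0 (T.reach x)}
      ≤ prS D1 {x | prS D1 (T.reach x) < M * prS D0 (T.reach x) ∧ T.eval x = true}
        + prS D1 {x | T.eval x = false} := by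
    rw [prS_eq_sum_filter, prS_eq_sum_filter, prS_eq_sum_filter]
    rw [← Finset.sum_union (by
      refine Finset.disjoint_left.mpr fun z hz hz' => ?_
      have h1 := (Finset.mem_filter.mp hz).2.2
      have h2 := (Finset.mem_filter.mp hz').2
      simp only [Set.mem_setOf_eq] at h1 h2
      rw [h1] at h2; exact Bool.noConfusion h2)]
    refine Finset.sum_le_sum_of_subset_of_nonneg ?_ (fun y _ _ => hn1 y)
    intro z hz
    have hzB := (Finset.mem_filter.mp hz).2
    simp only [Set.mem_setOf_eq] at hzB
    rcases Bool.eq_false_or_eq_true (T.eval z) with he | he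
    · exact Finset.mem_union_left _ (Finset.mem_filter.mpr ⟨Finset.mem_univ _, ⟨hzB, he⟩⟩)
    · exact Finset.mem_union_right _ (Finset.mem_filter.mpr ⟨Finset.mem_univ _, he⟩)
  have hkey := key_booster D0 D1 hn0 hn1 T M hM.le
  have hrej : prS D1 {x | T.eval x = false} ≤ δ1 := by
    have hsum : prS D1 {x | T.eval x = true} + prS D1 {x | T.eval x = false} = 1 := by
      rw [prS_eq_sum_filter, prS_eq_sum_filter, ← hs1]
      rw [← Finset.sum_filter_add_sum_filter_not Finset.univ
        (fun y => y ∈ {x | T.eval x = true}) D1]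
      congr 1
      refine Finset.sum_congr ?_ (fun _ _ => rfl)
      ext z; simp
    linarith
  have hacc : prS D1 {x | prS D1 (T.reach x) < M * prS D0 (T.reach x) ∧ T.eval x = true}
      ≤ M * δ0 := hkey.trans (mul_le_mul_of_nonneg_left h0 hM.le)
  linarith
end

section
/- There is a universal constant C > 0 such that for every partial boolean function f : {0,1}^n → {0,1,*} and every balanced input distribution D = ½D0 + ½D1 for f: bicorr_{1/3}(f,D) ≤ corr_{1/3}(f,D) ≤ C · bicorr_{1/3}(f,D). -/
open Finset

/-! ### Auxiliary development -/

namespace DTree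

variable {α ι ι' β β' : Type}

def relabel (g : ι → ι') : DTree α ι β → DTree α ι' β
  | .leaf b => .leaf b
  | .node i ch => .node (g i) (fun a => relabel g (ch a))

theorem eval_relabel (g : ι → ι') (t : DTree α ι β) (x : ι' → α) :
    (t.relabel g).eval x = t.eval (fun i => x (g i)) := by
  induction t with
  | leaf b => rfl
  | node i ch ih => simp [relabel, eval, ih]

theorem depth_relabel [Fintype α] (g : ι → ι') (t : DTree α ι β) :
    (t.relabel g).depth = t.depth := by
  induction t with
  | leaf b => rfl
  | node i ch ih => simp [relabel, depth, ih]

def graft (t : DTree α ι β) (f : β → DTree α ι β') : DTree α ι β' :=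
  match t with
  | .leaf b => f b
  | .node i ch => .node i (fun a => graft (ch a) f)

theorem eval_graft (t : DTree α ι β) (f : β → DTree α ι β') (x : ι → α) :
    (t.graft f).eval x = (f (t.eval x)).eval x := by
  induction t with
  | leaf b => rfl
  | node i ch ih => simp [graft, eval, ih]

theorem depth_graft_le [Fintype α] (t : DTree α ι β) (f : β → DTree α ι β') (m : ℕ)
    (hf : ∀ b, (f b).depth ≤ m) : (t.graft f).depth ≤ t.depth + m := by
  induction t with
  | leaf b => simpa [graft, depth] using hf b
  | node i ch ih =>
    simp only [graft, depth]
    rw [add_assoc]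
    refine Nat.add_le_add_left ?_ 1
    refine Finset.sup_le fun a _ => ?_
    exact (ih a).trans
      (Nat.add_le_add_right (Finset.le_sup (f := fun a => (ch a).depth) (Finset.mem_univ a)) m)

end DTree

section Binom

variable {R : ℕ}

noncomputable def wB (p : ℝ) (b : Bool) : ℝ := if b = false then p else 1 - p

noncomputable def Wt (p : ℝ) (v : Fin R → Bool) : ℝ := ∏ r, wB p (v r)

def Ncnt (v : Fin R → Bool) : ℕ := ∑ r, if v r = false then 1 else 0

theorem sum_pi_prod {m : ℕ} {Z : Type} [Fintype Z] (h : Fin m → Z → ℝ) :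
    ∑ y : Fin m → Z, ∏ r, h r (y r) = ∏ r, ∑ z, h r z := (Fintype.prod_sum h).symm

theorem sum_wB (p : ℝ) : ∑ b, wB p b = 1 := by
  simp [wB, Fintype.sum_bool]

theorem Wt_nonneg {p : ℝ} (hp0 : 0 ≤ p) (hp1 : p ≤ 1) (v : Fin R → Bool) : 0 ≤ Wt p v := by
  refine Finset.prod_nonneg fun r _ => ?_
  unfold wB; split <;> linarith

theorem sum_Wt (p : ℝ) : ∑ v : Fin R → Bool, Wt p v = 1 := by
  unfold Wt
  rw [sum_pi_prod (fun _ => wB p)]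
  rw [Finset.prod_congr rfl fun r _ => sum_wB p, Finset.prod_const_one]

theorem sum_Wt_coord (p : ℝ) (r : Fin R) (g : Bool → ℝ) :
    ∑ v : Fin R → Bool, Wt p v * g (v r) = ∑ b, wB p b * g b := by
  have key : ∀ v : Fin R → Bool,
      Wt p v * g (v r) = ∏ r', (if r' = r then wB p (v r') * g (v r') else wB p (v r')) := by
    intro v
    rw [Wt, ← Finset.mul_prod_erase univ (fun r' => wB p (v r')) (mem_univ r),
      ← Finset.mul_prod_erase univ _ (mem_univ r)]
    rw [if_pos rfl]
    rw [Finset.prod_congr rfl (fun r' hr' => if_neg (Finset.ne_of_mem_erase hr'))]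
    ring
  rw [Finset.sum_congr rfl fun v _ => key v]
  rw [sum_pi_prod (fun r' b => if r' = r then wB p b * g b else wB p b)]
  rw [← Finset.mul_prod_erase univ _ (mem_univ r)]
  have h1 : (∑ z : Bool, if r = r then wB p z * g z else wB p z) = ∑ b, wB p b * g b := by simp
  have h2 : ∀ x ∈ univ.erase r, (∑ z : Bool, if x = r then wB p z * g z else wB p z) = 1 := by
    intro x hx
    rw [Finset.sum_congr rfl fun z _ => if_neg (Finset.ne_of_mem_erase hx)]
    exact sum_wB p
  rw [h1, Finset.prod_congr rfl h2, Finset.prod_const_one, mul_one]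

theorem sum_Wt_coord2 (p : ℝ) (r s : Fin R) (hrs : r ≠ s) (g1 g2 : Bool → ℝ) :
    ∑ v : Fin R → Bool, Wt p v * (g1 (v r) * g2 (v s))
      = (∑ b, wB p b * g1 b) * (∑ b, wB p b * g2 b) := by
  set h : Fin R → Bool → ℝ :=
    fun r' b => if r' = r then wB p b * g1 b else if r' = s then wB p b * g2 b else wB p b with hh
  have hsr : s ∈ univ.erase r := Finset.mem_erase.2 ⟨hrs.symm, mem_univ s⟩
  have key : ∀ v : Fin R → Bool, Wt p v * (g1 (v r) * g2 (v s)) = ∏ r', h r' (v r') := by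
    intro v
    rw [Wt, ← Finset.mul_prod_erase univ (fun r' => wB p (v r')) (mem_univ r),
        ← Finset.mul_prod_erase _ (fun r' => wB p (v r')) hsr,
        ← Finset.mul_prod_erase univ (fun r' => h r' (v r')) (mem_univ r),
        ← Finset.mul_prod_erase _ (fun r' => h r' (v r')) hsr]
    have e1 : h r (v r) = wB p (v r) * g1 (v r) := by simp [hh]
    have e2 : h s (v s) = wB p (v s) * g2 (v s) := by simp [hh, hrs.symm]
    have e3 : ∏ r' ∈ (univ.erase r).erase s, h r' (v r')
        = ∏ r' ∈ (univ.erase r).erase s, wB p (v r') := by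
      refine Finset.prod_congr rfl fun x hx => ?_
      have hxs := Finset.ne_of_mem_erase hx
      have hxr := Finset.ne_of_mem_erase (Finset.mem_of_mem_erase hx)
      simp [hh, hxs, hxr]
    rw [e1, e2, e3]; ring
  rw [Finset.sum_congr rfl fun v _ => key v, sum_pi_prod h,
      ← Finset.mul_prod_erase univ (fun r' => ∑ b, h r' b) (mem_univ r),
      ← Finset.mul_prod_erase _ (fun r' => ∑ b, h r' b) hsr]
  have e1 : (∑ b, h r b) = ∑ b, wB p b * g1 b := by simp [hh]
  have e2 : (∑ b, h s b) = ∑ b, wB p b * g2 b := by simp [hh, hrs.symm]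
  have e3 : ∀ x ∈ (univ.erase r).erase s, (∑ b, h x b) = 1 := by
    intro x hx
    have hxs := Finset.ne_of_mem_erase hx
    have hxr := Finset.ne_of_mem_erase (Finset.mem_of_mem_erase hx)
    simp only [hh, if_neg hxr, if_neg hxs]
    exact sum_wB p
  rw [e1, e2, Finset.prod_congr rfl e3, Finset.prod_const_one, mul_one]

theorem Ncnt_cast (v : Fin R → Bool) :
    ((Ncnt v : ℝ)) = ∑ r, (if v r = false then (1:ℝ) else 0) := by
  unfold Ncnt; push_cast; rfl

theorem sum_Wt_N (p : ℝ) : ∑ v : Fin R → Bool, Wt p v * (Ncnt v : ℝ) = R * p := by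
  calc ∑ v : Fin R → Bool, Wt p v * (Ncnt v:ℝ)
      = ∑ v : Fin R → Bool, ∑ r, Wt p v * (if v r = false then (1:ℝ) else 0) := by
        refine Finset.sum_congr rfl fun v _ => ?_; rw [Ncnt_cast, Finset.mul_sum]
    _ = ∑ r : Fin R, ∑ v : Fin R → Bool, Wt p v * (if v r = false then (1:ℝ) else 0) :=
        Finset.sum_comm
    _ = ∑ _r : Fin R, ∑ b, wB p b * (if b = false then (1:ℝ) else 0) :=
        Finset.sum_congr rfl fun r _ => sum_Wt_coord p r (fun b => if b = false then (1:ℝ) else 0)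
    _ = R * p := by
        simp [Fintype.sum_bool, wB, Finset.sum_const, Finset.card_univ]

theorem sum_Wt_Nsq (p : ℝ) :
    ∑ v : Fin R → Bool, Wt p v * (Ncnt v : ℝ)^2 = R * p + ((R:ℝ)^2 - R) * p^2 := by
  have step1 : ∀ v : Fin R → Bool, Wt p v * (Ncnt v:ℝ)^2
      = ∑ r, ∑ s, Wt p v * ((if v r = false then (1:ℝ) else 0) *
          (if v s = false then (1:ℝ) else 0)) := by
    intro v
    rw [sq, Ncnt_cast, Finset.sum_mul_sum, Finset.mul_sum]
    refine Finset.sum_congr rfl fun r _ => ?_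
    rw [Finset.mul_sum]
  have inner : ∀ r s : Fin R, (∑ v : Fin R → Bool, Wt p v *
      ((if v r = false then (1:ℝ) else 0) * (if v s = false then (1:ℝ) else 0)))
      = if r = s then p else p^2 := by
    intro r s
    by_cases h : r = s
    · subst h; rw [if_pos rfl]
      have he : ∀ v : Fin R → Bool, Wt p v * ((if v r = false then (1:ℝ) else 0) *
          (if v r = false then (1:ℝ) else 0)) = Wt p v * (if v r = false then (1:ℝ) else 0) :=
        fun v => by cases hv : v r <;> simp [hv]
      rw [Finset.sum_congr rfl fun v _ => he v,
        sum_Wt_coord p r (fun b => if b = false then (1:ℝ) else 0)]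
      simp [Fintype.sum_bool, wB]
    · rw [if_neg h, sum_Wt_coord2 p r s h (fun b => if b = false then (1:ℝ) else 0)
        (fun b => if b = false then (1:ℝ) else 0)]
      simp [Fintype.sum_bool, wB]; ring
  calc ∑ v : Fin R → Bool, Wt p v * (Ncnt v:ℝ)^2
      = ∑ v : Fin R → Bool, ∑ r, ∑ s, Wt p v * ((if v r = false then (1:ℝ) else 0) *
          (if v s = false then (1:ℝ) else 0)) := Finset.sum_congr rfl fun v _ => step1 v
    _ = ∑ r : Fin R, ∑ v : Fin R → Bool, ∑ s, Wt p v * ((if v r = false then (1:ℝ) else 0) *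
          (if v s = false then (1:ℝ) else 0)) := Finset.sum_comm
    _ = ∑ r : Fin R, ∑ s : Fin R, ∑ v : Fin R → Bool, Wt p v *
          ((if v r = false then (1:ℝ) else 0) * (if v s = false then (1:ℝ) else 0)) :=
        Finset.sum_congr rfl fun r _ => Finset.sum_comm
    _ = ∑ r : Fin R, ∑ s : Fin R, (if r = s then p else p^2) :=
        Finset.sum_congr rfl fun r _ => Finset.sum_congr rfl fun s _ => inner r s
    _ = R * p + ((R:ℝ)^2 - R) * p^2 := by
        have hrow : ∀ r : Fin R, (∑ s : Fin R, if r = s then p else p^2)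
            = (p - p^2) + R * p^2 := by
          intro r
          have he : ∀ s : Fin R, (if r = s then p else p^2)
              = (if r = s then p - p^2 else 0) + p^2 := fun s => by split <;> ring
          rw [Finset.sum_congr rfl fun s _ => he s, Finset.sum_add_distrib,
            Finset.sum_ite_eq, if_pos (mem_univ r), Finset.sum_const, Finset.card_univ,
            Fintype.card_fin, nsmul_eq_mul]
        rw [Finset.sum_congr rfl fun r _ => hrow r, Finset.sum_const, Finset.card_univ,
          Fintype.card_fin, nsmul_eq_mul]
        ring

theorem sum_Wt_var (p : ℝ) :
    ∑ v : Fin R → Bool, Wt p v * ((Ncnt v : ℝ) - R * p)^2 = R * (p * (1 - p)) := by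
  have he : ∀ v : Fin R → Bool, Wt p v * ((Ncnt v:ℝ) - R*p)^2
      = (Wt p v * (Ncnt v:ℝ)^2 - (2*(R*p)) * (Wt p v * (Ncnt v:ℝ))) + (R*p)^2 * Wt p v :=
    fun v => by ring
  rw [Finset.sum_congr rfl fun v _ => he v, Finset.sum_add_distrib, Finset.sum_sub_distrib,
    ← Finset.mul_sum, ← Finset.mul_sum, sum_Wt_N, sum_Wt_Nsq, sum_Wt]
  ring

theorem cheb (p : ℝ) (hp0 : 0 ≤ p) (hp1 : p ≤ 1) {t : ℝ} (ht : 0 < t)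
    (A : (Fin R → Bool) → Prop) [DecidablePred A]
    (hA : ∀ v, A v → t ≤ |(Ncnt v : ℝ) - R * p|) :
    ∑ v : Fin R → Bool, (if A v then Wt p v else 0) ≤ R / (4 * t^2) := by
  have h1 : ∀ v : Fin R → Bool,
      (if A v then Wt p v else 0) ≤ Wt p v * ((Ncnt v:ℝ) - R*p)^2 / t^2 := by
    intro v
    have hw := Wt_nonneg hp0 hp1 v
    split
    · next hAv =>
      have h2 : t^2 ≤ ((Ncnt v:ℝ) - R*p)^2 := by
        calc t^2 ≤ |(Ncnt v:ℝ) - R*p|^2 := by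
              exact pow_le_pow_left₀ ht.le (hA v hAv) 2
          _ = ((Ncnt v:ℝ) - R*p)^2 := sq_abs _
      rw [le_div_iff₀ (by positivity)]
      exact mul_le_mul_of_nonneg_left h2 hw
    · positivity
  calc ∑ v : Fin R → Bool, (if A v then Wt p v else 0)
      ≤ ∑ v : Fin R → Bool, Wt p v * ((Ncnt v:ℝ) - R*p)^2 / t^2 :=
        Finset.sum_le_sum fun v _ => h1 v
    _ = (∑ v : Fin R → Bool, Wt p v * ((Ncnt v:ℝ) - R*p)^2) / t^2 := by
        rw [Finset.sum_div]
    _ = R * (p*(1-p)) / t^2 := by rw [sum_Wt_var]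
    _ ≤ R / (4*t^2) := by
        rw [div_le_div_iff₀ (by positivity) (by positivity)]
        have h3 : p * (1-p) ≤ 1/4 := by nlinarith [sq_nonneg (2*p - 1)]
        have h4 : (0:ℝ) ≤ (R:ℝ) * t^2 := by positivity
        nlinarith [mul_le_mul_of_nonneg_left h3 h4]

end Binom

section SumHelpers

theorem prS_eq_sum {γ : Type} [Fintype γ] (D : γ → ℝ) (P : γ → Prop) [DecidablePred P] :
    prS D {x | P x} = ∑ x, if P x then D x else 0 := by
  unfold prS
  refine Finset.sum_congr rfl fun x _ => ?_
  by_cases h : P x <;> simp [Set.indicator_apply, Set.mem_setOf_eq, h]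

theorem sum_if_compl {γ : Type} [Fintype γ] (μ : γ → ℝ) (P : γ → Prop) [DecidablePred P]
    (htot : ∑ x, μ x = 1) :
    ∑ x, (if P x then μ x else 0) = 1 - ∑ x, (if ¬ P x then μ x else 0) := by
  rw [← htot, ← Finset.sum_sub_distrib]
  refine Finset.sum_congr rfl fun x _ => ?_
  by_cases h : P x <;> simp [h]

theorem exists_ge_avg {γ : Type} [Fintype γ] (w c : γ → ℝ) (hw : ∀ x, 0 ≤ w x)
    (hsum : ∑ x, w x = 1) {a : ℝ} (h : a ≤ ∑ x, w x * c x) : ∃ x, a ≤ c x := by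
  by_contra hc
  push_neg at hc
  obtain ⟨x₀, hx₀⟩ : ∃ x₀, 0 < w x₀ := by
    by_contra hz
    push_neg at hz
    have : ∑ x, w x = 0 := le_antisymm (Finset.sum_nonpos fun x _ => hz x)
      (Finset.sum_nonneg fun x _ => hw x)
    rw [this] at hsum; norm_num at hsum
  have hlt : ∑ x, w x * c x < ∑ x, w x * a := by
    refine Finset.sum_lt_sum (fun x _ => mul_le_mul_of_nonneg_left (hc x).le (hw x))
      ⟨x₀, Finset.mem_univ x₀, (mul_lt_mul_iff_right₀ hx₀).2 (hc x₀)⟩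
  rw [← Finset.sum_mul, hsum, one_mul] at hlt
  linarith

theorem prod_if_all {m : ℕ} (P : Fin m → Prop) [DecidablePred P] (a : Fin m → ℝ) :
    ∏ r, (if P r then a r else 0) = if (∀ r, P r) then ∏ r, a r else 0 := by
  by_cases h : ∀ r, P r
  · rw [if_pos h]; exact Finset.prod_congr rfl fun r _ => if_pos (h r)
  · rw [if_neg h]; push_neg at h; obtain ⟨r, hr⟩ := h
    exact Finset.prod_eq_zero (mem_univ r) (if_neg hr)

end SumHelpers

section ProdD

theorem prodD_nonneg {n k : ℕ} {D : (Fin n → Bool) → ℝ} (hD : ∀ z, 0 ≤ D z)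
    (x : (Fin k × Fin n) → Bool) : 0 ≤ prodD D x :=
  Finset.prod_nonneg fun j _ => hD _

theorem prodD_total {n k : ℕ} {D : (Fin n → Bool) → ℝ} (hD : ∑ z, D z = 1) :
    ∑ x : (Fin k × Fin n) → Bool, prodD D x = 1 := by
  calc ∑ x : (Fin k × Fin n) → Bool, prodD D x
      = ∑ y : Fin k → (Fin n → Bool), ∏ j, D (y j) :=
        (Equiv.sum_comp (⟨fun y q => y q.1 q.2, fun x j i => x (j, i), fun _ => rfl,
          fun _ => rfl⟩ : (Fin k → (Fin n → Bool)) ≃ ((Fin k × Fin n) → Bool))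
          (fun x => prodD D x)).symm
    _ = ∏ j : Fin k, ∑ z, D z := sum_pi_prod (fun _ z => D z)
    _ = 1 := by rw [Finset.prod_congr rfl fun j _ => hD, Finset.prod_const_one]

end ProdD

section Merge

variable {n k : ℕ}

def merge2 (l r : (Fin k × Fin n) → Bool) : (Fin k × Fin 2 × Fin n) → Bool :=
  fun q => if q.2.1 = 0 then l (q.1, q.2.2) else r (q.1, q.2.2)

def e2 : ((Fin k × Fin 2 × Fin n) → Bool)
    ≃ ((Fin k × Fin n) → Bool) × ((Fin k × Fin n) → Bool) where
  toFun x := (fun p => x (p.1, 0, p.2), fun p => x (p.1, 1, p.2))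
  invFun lr := merge2 lr.1 lr.2
  left_inv x := by
    funext q
    obtain ⟨j, s, i⟩ := q
    have hs : s = 0 ∨ s = 1 := by omega
    rcases hs with h | h <;> subst h <;> simp [merge2]
  right_inv lr := by
    obtain ⟨l, r⟩ := lr
    refine Prod.ext ?_ ?_ <;> funext p <;> simp [merge2]

theorem sum_split2 (F : ((Fin k × Fin 2 × Fin n) → Bool) → ℝ) :
    ∑ x, F x = ∑ l : (Fin k × Fin n) → Bool, ∑ r : (Fin k × Fin n) → Bool, F (merge2 l r) := by
  rw [← Equiv.sum_comp (e2 (n := n) (k := k)).symm F, Fintype.sum_prod_type]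
  rfl

theorem prodD2_merge2 (Da Db : (Fin n → Bool) → ℝ) (l r : (Fin k × Fin n) → Bool) :
    prodD2 Da Db (merge2 l r) = prodD Da l * prodD Db r := by
  unfold prodD2 prodD
  rw [← Finset.prod_mul_distrib]
  refine Finset.prod_congr rfl fun j _ => ?_
  have h1 : (fun i => merge2 l r (j, 0, i)) = fun i => l (j, i) := by
    funext i; simp [merge2]
  have h2 : (fun i => merge2 l r (j, 1, i)) = fun i => r (j, i) := by
    funext i; simp [merge2]
  rw [h1, h2]

theorem prodD2_total {Da Db : (Fin n → Bool) → ℝ} (ha : ∑ z, Da z = 1) (hb : ∑ z, Db z = 1) :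
    ∑ x : (Fin k × Fin 2 × Fin n) → Bool, prodD2 Da Db x = 1 := by
  rw [sum_split2 (fun x => prodD2 Da Db x)]
  have hrow : ∀ l : (Fin k × Fin n) → Bool,
      ∑ r : (Fin k × Fin n) → Bool, prodD2 Da Db (merge2 l r) = prodD Da l := by
    intro l
    rw [Finset.sum_congr rfl fun r _ => prodD2_merge2 Da Db l r, ← Finset.mul_sum,
      prodD_total (k := k) hb, mul_one]
  rw [Finset.sum_congr rfl fun l _ => hrow l]
  exact prodD_total (k := k) ha

theorem merge2_left (l r : (Fin k × Fin n) → Bool) :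
    (fun p : Fin k × Fin n => merge2 l r (p.1, 0, p.2)) = l := by
  funext p; simp [merge2]

def mergeS (s₀ : Fin 2) (z w : (Fin k × Fin n) → Bool) : (Fin k × Fin 2 × Fin n) → Bool :=
  fun q => if q.2.1 = s₀ then z (q.1, q.2.2) else w (q.1, q.2.2)

theorem mergeS_zero (z w : (Fin k × Fin n) → Bool) : mergeS 0 z w = merge2 z w := rfl

theorem mergeS_one (z w : (Fin k × Fin n) → Bool) : mergeS 1 z w = merge2 w z := by
  funext q
  obtain ⟨j, s, i⟩ := q
  have hs : s = 0 ∨ s = 1 := by omega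
  rcases hs with h | h <;> subst h <;> simp [mergeS, merge2]

end Merge

namespace DTree

variable {n k : ℕ} {β : Type}

def hwire (s₀ : Fin 2) (w : (Fin k × Fin n) → Bool) :
    DTree Bool (Fin k × Fin 2 × Fin n) β → DTree Bool (Fin k × Fin n) β
  | .leaf b => .leaf b
  | .node p ch =>
      if p.2.1 = s₀ then .node (p.1, p.2.2) (fun a => hwire s₀ w (ch a))
      else hwire s₀ w (ch (w (p.1, p.2.2)))

theorem eval_hwire (s₀ : Fin 2) (w : (Fin k × Fin n) → Bool)
    (t : DTree Bool (Fin k × Fin 2 × Fin n) β) (z : (Fin k × Fin n) → Bool) :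
    (t.hwire s₀ w).eval z = t.eval (mergeS s₀ z w) := by
  induction t with
  | leaf b => rfl
  | node p ch ih =>
    by_cases h : p.2.1 = s₀
    · rw [hwire, if_pos h]
      show eval (node _ _) z = _
      rw [eval, eval, ih]
      congr 2
      show z (p.1, p.2.2) = mergeS s₀ z w p
      unfold mergeS
      rw [if_pos h]
    · rw [hwire, if_neg h, ih, eval]
      congr 2
      show w (p.1, p.2.2) = mergeS s₀ z w p
      unfold mergeS
      rw [if_neg h]

theorem depth_hwire_le (s₀ : Fin 2) (w : (Fin k × Fin n) → Bool)
    (t : DTree Bool (Fin k × Fin 2 × Fin n) β) :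
    (t.hwire s₀ w).depth ≤ t.depth := by
  induction t with
  | leaf b => exact le_rfl
  | node p ch ih =>
    by_cases h : p.2.1 = s₀
    · rw [hwire, if_pos h]
      show depth (node _ _) ≤ depth (node _ _)
      rw [depth, depth]
      refine Nat.add_le_add_left (Finset.sup_le fun a _ => ?_) 1
      exact (ih a).trans (Finset.le_sup (f := fun a => (ch a).depth) (Finset.mem_univ a))
    · rw [hwire, if_neg h]
      refine (ih _).trans ?_
      rw [depth]
      exact le_add_of_nonneg_of_le (Nat.zero_le 1)
        (Finset.le_sup (f := fun a => (ch a).depth) (Finset.mem_univ _))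

end DTree

section Rep

variable {R k n : ℕ}

def blk (r : Fin R) (p : Fin k × Fin n) : Fin (R * k) × Fin n :=
  (finProdFinEquiv (r, p.1), p.2)

def eRep : ((Fin (R * k) × Fin n) → Bool) ≃ (Fin R → ((Fin k × Fin n) → Bool)) where
  toFun x := fun r p => x (blk r p)
  invFun y := fun q => y (finProdFinEquiv.symm q.1).1 ((finProdFinEquiv.symm q.1).2, q.2)
  left_inv x := by
    funext q
    show x (blk _ _) = x q
    unfold blk
    rw [Prod.mk.eta, Equiv.apply_symm_apply]
  right_inv y := by
    funext r p
    show y (finProdFinEquiv.symm (finProdFinEquiv (r, p.1))).1 _ = y r p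
    simp [blk]

theorem prodD_blk (D : (Fin n → Bool) → ℝ) (x : (Fin (R * k) × Fin n) → Bool) :
    prodD D x = ∏ r : Fin R, prodD D (fun p => x (blk r p)) := by
  unfold prodD
  rw [← Equiv.prod_comp finProdFinEquiv (fun m => D (fun i => x (m, i))),
    Fintype.prod_prod_type]
  rfl

theorem split_rep (S : DTree Bool (Fin k × Fin n) Bool) (D : (Fin n → Bool) → ℝ)
    (φ : (Fin R → Bool) → Prop) [DecidablePred φ] :
    (∑ x : (Fin (R * k) × Fin n) → Bool,
        if φ (fun r => S.eval (fun p => x (blk r p))) then prodD D x else 0)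
    = ∑ v : Fin R → Bool, if φ v then
        ∏ r, (∑ z : (Fin k × Fin n) → Bool, if S.eval z = v r then prodD D z else 0) else 0 := by
  classical
  rw [← Equiv.sum_comp (eRep (R := R) (k := k) (n := n)).symm]
  have h1 : ∀ y : Fin R → ((Fin k × Fin n) → Bool),
      (if φ (fun r => S.eval (fun p => (eRep.symm y) (blk r p)))
          then prodD D (eRep.symm y) else 0)
      = if φ (fun r => S.eval (y r)) then ∏ r, prodD D (y r) else 0 := by
    intro y
    have hout : (fun r => S.eval (fun p => (eRep.symm y) (blk r p))) = fun r => S.eval (y r) := by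
      funext r
      congr 1
      show eRep (eRep.symm y) r = y r
      rw [Equiv.apply_symm_apply]
    have hw : prodD D (eRep.symm y) = ∏ r, prodD D (y r) := by
      rw [prodD_blk]
      refine Finset.prod_congr rfl fun r _ => ?_
      congr 1
      show eRep (eRep.symm y) r = y r
      rw [Equiv.apply_symm_apply]
    rw [hout, hw]
  rw [Finset.sum_congr rfl fun y _ => h1 y]
  have h2 : ∀ y : Fin R → ((Fin k × Fin n) → Bool),
      (if φ (fun r => S.eval (y r)) then ∏ r, prodD D (y r) else 0)
      = ∑ v : Fin R → Bool, if (fun r => S.eval (y r)) = v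
          then (if φ v then ∏ r, prodD D (y r) else 0) else 0 := by
    intro y
    rw [Finset.sum_ite_eq univ (fun r => S.eval (y r))
      (fun v => if φ v then ∏ r, prodD D (y r) else 0), if_pos (Finset.mem_univ _)]
  rw [Finset.sum_congr rfl fun y _ => h2 y, Finset.sum_comm]
  refine Finset.sum_congr rfl fun v _ => ?_
  have h3 : ∀ y : Fin R → ((Fin k × Fin n) → Bool),
      (if (fun r => S.eval (y r)) = v then (if φ v then ∏ r, prodD D (y r) else 0) else 0)
      = (if φ v then (if ∀ r, S.eval (y r) = v r then ∏ r, prodD D (y r) else 0) else 0) := by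
    intro y
    by_cases hφ : φ v
    · by_cases he : (fun r => S.eval (y r)) = v
      · have h5 : ∀ r, S.eval (y r) = v r := fun r => congrFun he r
        simp [hφ, he, h5]
      · have h5 : ¬ ∀ r, S.eval (y r) = v r := fun h => he (funext h)
        simp [hφ, he, h5]
    · simp [hφ]
  rw [Finset.sum_congr rfl fun y _ => h3 y]
  by_cases hφ : φ v
  · rw [if_pos hφ, Finset.sum_congr rfl fun y _ => if_pos hφ]
    have h4 : ∀ y : Fin R → ((Fin k × Fin n) → Bool),
        (if ∀ r, S.eval (y r) = v r then ∏ r, prodD D (y r) else 0)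
        = ∏ r, (if S.eval (y r) = v r then prodD D (y r) else 0) := by
      intro y
      rw [prod_if_all (fun r => S.eval (y r) = v r) (fun r => prodD D (y r))]
    rw [Finset.sum_congr rfl fun y _ => h4 y,
      sum_pi_prod (fun r z => if S.eval z = v r then prodD D z else 0)]
  · rw [if_neg hφ, Finset.sum_congr rfl fun y _ => if_neg hφ, Finset.sum_const_zero]

end Rep

namespace DTree

def seqC {α ι : Type} (f : ℕ → DTree α ι Bool) (out : ℕ → Bool) : ℕ → ℕ → DTree α ι Bool
  | 0, c => .leaf (out c)
  | m + 1, c => (f m).graft fun b => seqC f out m (c + if b then 0 else 1)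

theorem eval_seqC {α ι : Type} (f : ℕ → DTree α ι Bool) (out : ℕ → Bool) (x : ι → α) :
    ∀ m c, (seqC f out m c).eval x
      = out (c + ∑ r ∈ Finset.range m, if (f r).eval x = false then 1 else 0) := by
  intro m
  induction m with
  | zero => intro c; simp [seqC, eval]
  | succ m ih =>
    intro c
    rw [seqC, eval_graft, ih, Finset.sum_range_succ]
    congr 1
    cases h : (f m).eval x <;> simp [h] <;> omega

theorem depth_seqC_le {α ι : Type} [Fintype α] (f : ℕ → DTree α ι Bool) (out : ℕ → Bool)
    (d : ℕ) (hf : ∀ r, (f r).depth ≤ d) : ∀ m c, (seqC f out m c).depth ≤ m * d := by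
  intro m
  induction m with
  | zero => intro c; simp [seqC, depth]
  | succ m ih =>
    intro c
    rw [seqC]
    refine (depth_graft_le _ _ (m * d) fun b => ih _).trans ?_
    calc (f m).depth + m * d ≤ d + m * d := Nat.add_le_add_right (hf m) _
      _ = (m + 1) * d := by ring

end DTree

theorem amplify {n k q : ℕ} (hk : 0 < k) (D0 D1 : (Fin n → Bool) → ℝ)
    (hD0 : IsDist D0) (hD1 : IsDist D1)
    (S : DTree Bool (Fin k × Fin n) Bool) (hd : S.depth ≤ q)
    (hgap : 1/6 ≤ (∑ z : (Fin k × Fin n) → Bool, if S.eval z = false then prodD D1 z else 0)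
          - (∑ z : (Fin k × Fin n) → Bool, if S.eval z = false then prodD D0 z else 0)) :
    ∃ K, 0 < K ∧ ∃ U : DTree Bool (Fin K × Fin n) Bool, U.depth ≤ 120 * q ∧
      1 - 1/3 ≤ (prS (prodD D0) {x | U.eval x = false}
        + prS (prodD D1) {x | U.eval x = true}) / 2 := by
  classical
  have hb : ∀ (D : (Fin n → Bool) → ℝ), IsDist D →
      0 ≤ (∑ z : (Fin k × Fin n) → Bool, if S.eval z = false then prodD D z else 0) ∧
      (∑ z : (Fin k × Fin n) → Bool, if S.eval z = false then prodD D z else 0) ≤ 1 := by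
    intro D hD
    constructor
    · refine Finset.sum_nonneg fun z _ => ?_
      split
      · exact prodD_nonneg hD.1 z
      · exact le_rfl
    · calc (∑ z : (Fin k × Fin n) → Bool, if S.eval z = false then prodD D z else 0)
          ≤ ∑ z : (Fin k × Fin n) → Bool, prodD D z := by
            refine Finset.sum_le_sum fun z _ => ?_
            split
            · exact le_rfl
            · exact prodD_nonneg hD.1 z
        _ = 1 := prodD_total hD.2
  have hcompl : ∀ (D : (Fin n → Bool) → ℝ), IsDist D →
      (∑ z : (Fin k × Fin n) → Bool, if S.eval z = true then prodD D z else 0)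
      = 1 - ∑ z : (Fin k × Fin n) → Bool, if S.eval z = false then prodD D z else 0 := by
    intro D hD
    rw [sum_if_compl (fun z => prodD D z) (fun z => S.eval z = true) (prodD_total hD.2)]
    congr 1
    refine Finset.sum_congr rfl fun z _ => if_congr ?_ rfl rfl
    cases h : S.eval z <;> simp [h]
  set p0 : ℝ := ∑ z : (Fin k × Fin n) → Bool, if S.eval z = false then prodD D0 z else 0
    with hp0def
  set p1 : ℝ := ∑ z : (Fin k × Fin n) → Bool, if S.eval z = false then prodD D1 z else 0
    with hp1def
  obtain ⟨hp0n, hp0l⟩ := hb D0 hD0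
  obtain ⟨hp1n, hp1l⟩ := hb D1 hD1
  set θ : ℕ := ⌈(120:ℝ) * p0⌉₊ + 10 with hθdef
  have hθ1 : (120:ℝ) * p0 + 10 ≤ (θ:ℝ) := by
    rw [hθdef]
    push_cast
    have := Nat.le_ceil ((120:ℝ) * p0)
    linarith
  have hθ2 : (θ:ℝ) ≤ 120 * p0 + 11 := by
    rw [hθdef]
    push_cast
    have := (Nat.ceil_lt_add_one (by positivity : (0:ℝ) ≤ 120 * p0))
    linarith
  refine ⟨120 * k, Nat.mul_pos (by norm_num) hk, ?_⟩
  set f : ℕ → DTree Bool (Fin (120 * k) × Fin n) Bool :=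
    fun m => if h : m < 120 then S.relabel (blk (R := 120) ⟨m, h⟩) else .leaf true with hfdef
  refine ⟨DTree.seqC f (fun c => decide (θ ≤ c)) 120 0, ?_, ?_⟩
  · have hf : ∀ r, (f r).depth ≤ q := by
      intro r
      rw [hfdef]
      dsimp only
      split
      · rw [DTree.depth_relabel]; exact hd
      · exact Nat.zero_le q
    exact DTree.depth_seqC_le f _ q hf 120 0
  -- success probability
  have hEval : ∀ x : (Fin (120 * k) × Fin n) → Bool,
      (DTree.seqC f (fun c => decide (θ ≤ c)) 120 0).eval x
      = decide (θ ≤ Ncnt (fun r : Fin 120 => S.eval (fun p => x (blk r p)))) := by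
    intro x
    have hsum : (∑ r ∈ Finset.range 120, if (f r).eval x = false then 1 else 0)
        = Ncnt (fun r : Fin 120 => S.eval (fun p => x (blk r p))) := by
      unfold Ncnt
      rw [← Fin.sum_univ_eq_sum_range (fun m => if (f m).eval x = false then 1 else 0) 120]
      refine Finset.sum_congr rfl fun r _ => ?_
      have hfr : f r.val = S.relabel (blk r) := by
        rw [hfdef]
        dsimp only
        rw [dif_pos r.isLt, Fin.eta]
      rw [hfr, DTree.eval_relabel]
    rw [DTree.eval_seqC, Nat.zero_add, hsum]
  have hev0 : ∀ x : (Fin (120 * k) × Fin n) → Bool,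
      ((DTree.seqC f (fun c => decide (θ ≤ c)) 120 0).eval x = false)
      ↔ ¬ (θ ≤ Ncnt (fun r : Fin 120 => S.eval (fun p => x (blk r p)))) := by
    intro x; rw [hEval x]; simp
  have hev1 : ∀ x : (Fin (120 * k) × Fin n) → Bool,
      ((DTree.seqC f (fun c => decide (θ ≤ c)) 120 0).eval x = true)
      ↔ (θ ≤ Ncnt (fun r : Fin 120 => S.eval (fun p => x (blk r p)))) := by
    intro x; rw [hEval x]; simp
  have hfac : ∀ (D : (Fin n → Bool) → ℝ), IsDist D →
      ∀ (pD : ℝ), pD = (∑ z : (Fin k × Fin n) → Bool, if S.eval z = false then prodD D z else 0) →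
      ∀ v : Fin 120 → Bool,
      (∏ r, (∑ z : (Fin k × Fin n) → Bool, if S.eval z = v r then prodD D z else 0)) = Wt pD v := by
    intro D hD pD hpD v
    unfold Wt
    refine Finset.prod_congr rfl fun r _ => ?_
    cases hv : v r
    · have hwb : wB pD false = pD := by simp [wB]
      rw [hwb, hpD]
    · have hwb : wB pD true = 1 - pD := by simp [wB]
      rw [hwb, hpD, hcompl D hD]
  have hS0 : prS (prodD D0) {x | (DTree.seqC f (fun c => decide (θ ≤ c)) 120 0).eval x = false}
      = ∑ v : Fin 120 → Bool, if ¬ (θ ≤ Ncnt v) then Wt p0 v else 0 := by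
    calc prS (prodD D0) {x | (DTree.seqC f (fun c => decide (θ ≤ c)) 120 0).eval x = false}
        = ∑ x : (Fin (120 * k) × Fin n) → Bool,
            if ¬ (θ ≤ Ncnt (fun r : Fin 120 => S.eval (fun p => x (blk r p))))
            then prodD D0 x else 0 := by
          rw [prS_eq_sum]
          exact Finset.sum_congr rfl fun x _ => if_congr (hev0 x) rfl rfl
      _ = ∑ v : Fin 120 → Bool, if ¬ (θ ≤ Ncnt v) then
            ∏ r, (∑ z : (Fin k × Fin n) → Bool, if S.eval z = v r then prodD D0 z else 0)
            else 0 :=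
          split_rep S D0 (fun v => ¬ (θ ≤ Ncnt v))
      _ = ∑ v : Fin 120 → Bool, if ¬ (θ ≤ Ncnt v) then Wt p0 v else 0 := by
          refine Finset.sum_congr rfl fun v _ => ?_
          exact if_congr Iff.rfl (hfac D0 hD0 p0 hp0def v) rfl
  have hS1 : prS (prodD D1) {x | (DTree.seqC f (fun c => decide (θ ≤ c)) 120 0).eval x = true}
      = ∑ v : Fin 120 → Bool, if (θ ≤ Ncnt v) then Wt p1 v else 0 := by
    calc prS (prodD D1) {x | (DTree.seqC f (fun c => decide (θ ≤ c)) 120 0).eval x = true}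
        = ∑ x : (Fin (120 * k) × Fin n) → Bool,
            if (θ ≤ Ncnt (fun r : Fin 120 => S.eval (fun p => x (blk r p))))
            then prodD D1 x else 0 := by
          rw [prS_eq_sum]
          exact Finset.sum_congr rfl fun x _ => if_congr (hev1 x) rfl rfl
      _ = ∑ v : Fin 120 → Bool, if (θ ≤ Ncnt v) then
            ∏ r, (∑ z : (Fin k × Fin n) → Bool, if S.eval z = v r then prodD D1 z else 0)
            else 0 :=
          split_rep S D1 (fun v => (θ ≤ Ncnt v))
      _ = ∑ v : Fin 120 → Bool, if (θ ≤ Ncnt v) then Wt p1 v else 0 := by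
          refine Finset.sum_congr rfl fun v _ => ?_
          exact if_congr Iff.rfl (hfac D1 hD1 p1 hp1def v) rfl
  have herr0 : ∑ v : Fin 120 → Bool, (if (θ ≤ Ncnt v) then Wt p0 v else 0) ≤ 3/10 := by
    have := cheb (R := 120) p0 hp0n hp0l (t := 10) (by norm_num)
      (fun v => θ ≤ Ncnt v) (fun v hv => ?_)
    · calc ∑ v : Fin 120 → Bool, (if (θ ≤ Ncnt v) then Wt p0 v else 0)
          ≤ (120:ℕ) / (4 * (10:ℝ)^2) := this
        _ = 3/10 := by norm_num
    · have h1 : (θ:ℝ) ≤ (Ncnt v : ℝ) := Nat.cast_le.2 hv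
      have h2 : (10:ℝ) ≤ (Ncnt v : ℝ) - 120 * p0 := by linarith
      push_cast
      exact h2.trans (le_abs_self _)
  have herr1 : ∑ v : Fin 120 → Bool, (if ¬ (θ ≤ Ncnt v) then Wt p1 v else 0) ≤ 3/10 := by
    have := cheb (R := 120) p1 hp1n hp1l (t := 10) (by norm_num)
      (fun v => ¬ (θ ≤ Ncnt v)) (fun v hv => ?_)
    · calc ∑ v : Fin 120 → Bool, (if ¬ (θ ≤ Ncnt v) then Wt p1 v else 0)
          ≤ (120:ℕ) / (4 * (10:ℝ)^2) := this
        _ = 3/10 := by norm_num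
    · have h1 : Ncnt v + 1 ≤ θ := Nat.succ_le_of_lt (Nat.lt_of_not_le hv)
      have h1' : (Ncnt v : ℝ) + 1 ≤ (θ:ℝ) := by exact_mod_cast h1
      have h2 : (10:ℝ) ≤ 120 * p1 - (Ncnt v : ℝ) := by linarith
      push_cast
      rw [abs_sub_comm]
      exact h2.trans (le_abs_self _)
  have hcv0 : ∑ v : Fin 120 → Bool, (if ¬ (θ ≤ Ncnt v) then Wt p0 v else 0)
      = 1 - ∑ v : Fin 120 → Bool, (if (θ ≤ Ncnt v) then Wt p0 v else 0) := by
    have := sum_if_compl (Wt p0) (fun v : Fin 120 → Bool => (θ ≤ Ncnt v)) (sum_Wt p0)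
    linarith
  have hcv1 : ∑ v : Fin 120 → Bool, (if (θ ≤ Ncnt v) then Wt p1 v else 0)
      = 1 - ∑ v : Fin 120 → Bool, (if ¬ (θ ≤ Ncnt v) then Wt p1 v else 0) :=
    sum_if_compl (Wt p1) (fun v : Fin 120 → Bool => (θ ≤ Ncnt v)) (sum_Wt p1)
  rw [hS0, hS1, hcv0, hcv1]
  linarith

noncomputable def FFb {n k : ℕ} (T : DTree Bool (Fin k × Fin 2 × Fin n) Bool)
    (Da Db : (Fin n → Bool) → ℝ) : ℝ :=
  ∑ l : (Fin k × Fin n) → Bool, ∑ r : (Fin k × Fin n) → Bool,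
    if T.eval (merge2 l r) = false then prodD Da l * prodD Db r else 0

theorem extract {n k q : ℕ} (D0 D1 : (Fin n → Bool) → ℝ)
    (hD0 : IsDist D0) (hD1 : IsDist D1)
    (T : DTree Bool (Fin k × Fin 2 × Fin n) Bool) (hd : T.depth ≤ q)
    (hsucc : 1 - 1/3 ≤ (prS (prodD2 D0 D1) {x | T.eval x = false}
        + prS (prodD2 D1 D0) {x | T.eval x = true}) / 2) :
    ∃ S : DTree Bool (Fin k × Fin n) Bool, S.depth ≤ q ∧
      1/6 ≤ (∑ z : (Fin k × Fin n) → Bool, if S.eval z = false then prodD D1 z else 0)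
          - (∑ z : (Fin k × Fin n) → Bool, if S.eval z = false then prodD D0 z else 0) := by
  classical
  have hprS : ∀ Da Db : (Fin n → Bool) → ℝ,
      prS (prodD2 Da Db) {x | T.eval x = false} = FFb T Da Db := by
    intro Da Db
    rw [prS_eq_sum, sum_split2 (fun x => if T.eval x = false then prodD2 Da Db x else 0)]
    exact Finset.sum_congr rfl fun l _ => Finset.sum_congr rfl fun r _ =>
      if_congr Iff.rfl (prodD2_merge2 Da Db l r) rfl
  have h10 : prS (prodD2 D1 D0) {x | T.eval x = true} = 1 - FFb T D1 D0 := by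
    rw [prS_eq_sum, sum_if_compl (fun x => prodD2 D1 D0 x) (fun x => T.eval x = true)
      (prodD2_total (k := k) hD1.2 hD0.2)]
    have hc : (∑ x : (Fin k × Fin 2 × Fin n) → Bool,
        if ¬ (T.eval x = true) then prodD2 D1 D0 x else 0) = FFb T D1 D0 := by
      rw [← hprS D1 D0, prS_eq_sum]
      exact Finset.sum_congr rfl fun x _ =>
        if_congr (by cases h : T.eval x <;> simp [h]) rfl rfl
    rw [hc]
  have hkey : 1/3 ≤ FFb T D0 D1 - FFb T D1 D0 := by
    rw [hprS D0 D1, h10] at hsucc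
    linarith
  have hpull : ∀ Da Db : (Fin n → Bool) → ℝ, FFb T Da Db
      = ∑ l : (Fin k × Fin n) → Bool, prodD Da l *
          (∑ r : (Fin k × Fin n) → Bool,
            if T.eval (merge2 l r) = false then prodD Db r else 0) := by
    intro Da Db
    unfold FFb
    refine Finset.sum_congr rfl fun l _ => ?_
    rw [Finset.mul_sum]
    refine Finset.sum_congr rfl fun r _ => ?_
    by_cases hc : T.eval (merge2 l r) = false
    · rw [if_pos hc, if_pos hc]
    · rw [if_neg hc, if_neg hc, mul_zero]
  have hpull2 : ∀ Da Db : (Fin n → Bool) → ℝ, FFb T Da Db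
      = ∑ r : (Fin k × Fin n) → Bool, prodD Db r *
          (∑ l : (Fin k × Fin n) → Bool,
            if T.eval (merge2 l r) = false then prodD Da l else 0) := by
    intro Da Db
    unfold FFb
    rw [Finset.sum_comm]
    refine Finset.sum_congr rfl fun r _ => ?_
    rw [Finset.mul_sum]
    refine Finset.sum_congr rfl fun l _ => ?_
    by_cases hc : T.eval (merge2 l r) = false
    · rw [if_pos hc, if_pos hc]; ring
    · rw [if_neg hc, if_neg hc, mul_zero]
  by_cases hcase : 1/6 ≤ FFb T D0 D1 - FFb T D0 D0
  · -- hardwire the left half, live side = 1 (right)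
    have havg : 1/6 ≤ ∑ l : (Fin k × Fin n) → Bool, prodD D0 l *
        ((∑ r : (Fin k × Fin n) → Bool, if T.eval (merge2 l r) = false then prodD D1 r else 0)
        - (∑ r : (Fin k × Fin n) → Bool,
            if T.eval (merge2 l r) = false then prodD D0 r else 0)) := by
      have he : ∑ l : (Fin k × Fin n) → Bool, prodD D0 l *
          ((∑ r : (Fin k × Fin n) → Bool, if T.eval (merge2 l r) = false then prodD D1 r else 0)
          - (∑ r : (Fin k × Fin n) → Bool,
              if T.eval (merge2 l r) = false then prodD D0 r else 0))
          = FFb T D0 D1 - FFb T D0 D0 := by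
        rw [hpull D0 D1, hpull D0 D0, ← Finset.sum_sub_distrib]
        exact Finset.sum_congr rfl fun l _ => by ring
      rw [he]
      exact hcase
    obtain ⟨lstar, hl⟩ := exists_ge_avg (prodD D0) _
      (fun l => prodD_nonneg hD0.1 l) (prodD_total hD0.2) havg
    refine ⟨T.hwire 1 lstar, (T.depth_hwire_le 1 lstar).trans hd, ?_⟩
    have hsum : ∀ D : (Fin n → Bool) → ℝ,
        (∑ z : (Fin k × Fin n) → Bool, if (T.hwire 1 lstar).eval z = false
          then prodD D z else 0)
        = ∑ r : (Fin k × Fin n) → Bool,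
            if T.eval (merge2 lstar r) = false then prodD D r else 0 := by
      intro D
      refine Finset.sum_congr rfl fun z _ => if_congr ?_ rfl rfl
      rw [DTree.eval_hwire, mergeS_one]
    rw [hsum D1, hsum D0]
    exact hl
  · -- hardwire the right half, live side = 0 (left), negate output
    have hcase2 : 1/6 ≤ FFb T D0 D0 - FFb T D1 D0 := by linarith
    have havg : 1/6 ≤ ∑ r : (Fin k × Fin n) → Bool, prodD D0 r *
        ((∑ l : (Fin k × Fin n) → Bool, if T.eval (merge2 l r) = false then prodD D0 l else 0)
        - (∑ l : (Fin k × Fin n) → Bool,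
            if T.eval (merge2 l r) = false then prodD D1 l else 0)) := by
      have he : ∑ r : (Fin k × Fin n) → Bool, prodD D0 r *
          ((∑ l : (Fin k × Fin n) → Bool, if T.eval (merge2 l r) = false then prodD D0 l else 0)
          - (∑ l : (Fin k × Fin n) → Bool,
              if T.eval (merge2 l r) = false then prodD D1 l else 0))
          = FFb T D0 D0 - FFb T D1 D0 := by
        rw [hpull2 D0 D0, hpull2 D1 D0, ← Finset.sum_sub_distrib]
        exact Finset.sum_congr rfl fun r _ => by ring
      rw [he]
      exact hcase2
    obtain ⟨rstar, hr⟩ := exists_ge_avg (prodD D0) _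
      (fun r => prodD_nonneg hD0.1 r) (prodD_total hD0.2) havg
    refine ⟨(T.hwire 0 rstar).graft (fun b => DTree.leaf (!b)), ?_, ?_⟩
    · have := DTree.depth_graft_le (T.hwire 0 rstar) (fun b => DTree.leaf (!b)) 0
        (fun b => le_rfl)
      simpa using this.trans ((T.depth_hwire_le 0 rstar).trans hd)
    · have hev : ∀ z : (Fin k × Fin n) → Bool,
          (((T.hwire 0 rstar).graft (fun b => DTree.leaf (!b))).eval z = false)
          ↔ (T.eval (merge2 z rstar) = true) := by
        intro z
        rw [DTree.eval_graft, DTree.eval_hwire, mergeS_zero]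
        cases h : T.eval (merge2 z rstar) <;> simp [h, DTree.eval]
      have hsum : ∀ D : (Fin n → Bool) → ℝ, IsDist D →
          (∑ z : (Fin k × Fin n) → Bool,
            if ((T.hwire 0 rstar).graft (fun b => DTree.leaf (!b))).eval z = false
            then prodD D z else 0)
          = 1 - ∑ l : (Fin k × Fin n) → Bool,
              if T.eval (merge2 l rstar) = false then prodD D l else 0 := by
        intro D hD
        have h1 : (∑ z : (Fin k × Fin n) → Bool,
            if ((T.hwire 0 rstar).graft (fun b => DTree.leaf (!b))).eval z = false
            then prodD D z else 0)
            = ∑ z : (Fin k × Fin n) → Bool,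
              if T.eval (merge2 z rstar) = true then prodD D z else 0 :=
          Finset.sum_congr rfl fun z _ => if_congr (hev z) rfl rfl
        rw [h1, sum_if_compl (fun z => prodD D z) (fun z => T.eval (merge2 z rstar) = true)
          (prodD_total hD.2)]
        congr 1
        exact Finset.sum_congr rfl fun z _ =>
          if_congr (by cases h : T.eval (merge2 z rstar) <;> simp [h]) rfl rfl
      rw [hsum D1 hD1, hsum D0 hD0]
      linarith

theorem dirA {n k q : ℕ} (D0 D1 : (Fin n → Bool) → ℝ)
    (hD0 : IsDist D0) (hD1 : IsDist D1)
    (T : DTree Bool (Fin k × Fin n) Bool) (hd : T.depth ≤ q)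
    (hsucc : 1 - 1/3 ≤ (prS (prodD D0) {x | T.eval x = false}
        + prS (prodD D1) {x | T.eval x = true}) / 2) :
    ∃ T2 : DTree Bool (Fin k × Fin 2 × Fin n) Bool, T2.depth ≤ q ∧
      1 - 1/3 ≤ (prS (prodD2 D0 D1) {x | T2.eval x = false}
        + prS (prodD2 D1 D0) {x | T2.eval x = true}) / 2 := by
  classical
  refine ⟨T.relabel (fun p => (p.1, 0, p.2)), by rw [DTree.depth_relabel]; exact hd, ?_⟩
  have key : ∀ (Da Db : (Fin n → Bool) → ℝ), (∑ z, Db z = 1) → ∀ b : Bool,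
      prS (prodD2 Da Db)
        {x | (T.relabel (fun p : Fin k × Fin n => (p.1, 0, p.2))).eval x = b}
      = prS (prodD Da) {z | T.eval z = b} := by
    intro Da Db hDb b
    calc prS (prodD2 Da Db)
          {x | (T.relabel (fun p : Fin k × Fin n => (p.1, 0, p.2))).eval x = b}
        = ∑ x : (Fin k × Fin 2 × Fin n) → Bool,
            if T.eval (fun p => x (p.1, 0, p.2)) = b then prodD2 Da Db x else 0 := by
          rw [prS_eq_sum]
          exact Finset.sum_congr rfl fun x _ =>
            if_congr (by rw [DTree.eval_relabel]) rfl rfl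
      _ = ∑ l : (Fin k × Fin n) → Bool, ∑ r : (Fin k × Fin n) → Bool,
            if T.eval (fun p => merge2 l r (p.1, 0, p.2)) = b
            then prodD2 Da Db (merge2 l r) else 0 :=
          sum_split2 (fun x =>
            if T.eval (fun p => x (p.1, 0, p.2)) = b then prodD2 Da Db x else 0)
      _ = ∑ l : (Fin k × Fin n) → Bool, (if T.eval l = b then prodD Da l else 0) := by
          refine Finset.sum_congr rfl fun l _ => ?_
          calc ∑ r : (Fin k × Fin n) → Bool,
                (if T.eval (fun p => merge2 l r (p.1, 0, p.2)) = b
                  then prodD2 Da Db (merge2 l r) else 0)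
              = ∑ r : (Fin k × Fin n) → Bool,
                (if T.eval l = b then prodD Da l * prodD Db r else 0) := by
                refine Finset.sum_congr rfl fun r _ =>
                  if_congr ?_ (prodD2_merge2 Da Db l r) rfl
                rw [merge2_left]
            _ = if T.eval l = b then prodD Da l else 0 := by
                by_cases hc : T.eval l = b
                · rw [if_pos hc, Finset.sum_congr rfl fun r _ => if_pos hc,
                    ← Finset.mul_sum, prodD_total hDb, mul_one]
                · rw [if_neg hc, Finset.sum_congr rfl fun r _ => if_neg hc,
                    Finset.sum_const_zero]
      _ = prS (prodD Da) {z | T.eval z = b} := (prS_eq_sum _ _).symm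
  rw [key D0 D1 hD1.2 false, key D1 D0 hD0.2 true]
  exact hsucc

/-- `bicorr_{1/3}(f,D) ≤ corr_{1/3}(f,D) ≤ C · bicorr_{1/3}(f,D)` for a
universal constant `C > 0`. -/
theorem corr_eq_bicorr :
    ∃ C : ℝ, 0 < C ∧
      ∀ (n : ℕ) (f : (Fin n → Bool) → Option Bool) (D0 D1 : (Fin n → Bool) → ℝ),
        BalancedDist f D0 D1 →
          bicorrC (1/3) D0 D1 ≤ corrC (1/3) D0 D1 ∧
          (corrC (1/3) D0 D1 : ℝ) ≤ C * (bicorrC (1/3) D0 D1 : ℝ) := by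
  classical
  refine ⟨120, by norm_num, ?_⟩
  intro n f D0 D1 hBal
  obtain ⟨hD0, hD1, -, -⟩ := hBal
  set A : Set ℕ := {q | ∃ k, 0 < k ∧ ∃ T : DTree Bool (Fin k × Fin n) Bool, T.depth ≤ q ∧
    1 - 1/3 ≤ (prS (prodD D0) {x | T.eval x = false}
      + prS (prodD D1) {x | T.eval x = true}) / 2} with hA
  set B : Set ℕ := {q | ∃ k, 0 < k ∧ ∃ T : DTree Bool (Fin k × Fin 2 × Fin n) Bool,
    T.depth ≤ q ∧
    1 - 1/3 ≤ (prS (prodD2 D0 D1) {x | T.eval x = false}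
      + prS (prodD2 D1 D0) {x | T.eval x = true}) / 2} with hB
  have hcorr : corrC (1/3) D0 D1 = sInf A := rfl
  have hbicorr : bicorrC (1/3) D0 D1 = sInf B := rfl
  have hAB : ∀ q ∈ A, q ∈ B := by
    rintro q ⟨k, hk, T, hd, hs⟩
    obtain ⟨T2, hd2, hs2⟩ := dirA D0 D1 hD0 hD1 T hd hs
    exact ⟨k, hk, T2, hd2, hs2⟩
  have hBA : ∀ q ∈ B, (120 * q) ∈ A := by
    rintro q ⟨k, hk, T, hd, hs⟩
    obtain ⟨S, hdS, hgap⟩ := extract D0 D1 hD0 hD1 T hd hs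
    obtain ⟨K, hK, U, hdU, hsU⟩ := amplify hk D0 D1 hD0 hD1 S hdS hgap
    exact ⟨K, hK, U, hdU, hsU⟩
  constructor
  · rcases Set.eq_empty_or_nonempty A with hAe | hAne
    · have hBe : B = ∅ := by
        rw [Set.eq_empty_iff_forall_notMem]
        intro q hq
        have h := hBA q hq
        rw [hAe] at h
        exact h
      rw [hcorr, hbicorr, hAe, hBe]
    · rw [hcorr, hbicorr]
      exact Nat.sInf_le (hAB _ (Nat.sInf_mem hAne))
  · rcases Set.eq_empty_or_nonempty B with hBe | hBne
    · have hAe : A = ∅ := by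
        rw [Set.eq_empty_iff_forall_notMem]
        intro q hq
        have h := hAB q hq
        rw [hBe] at h
        exact h
      rw [hcorr, hbicorr, hAe, hBe, Nat.sInf_empty]
      norm_num
    · rw [hcorr, hbicorr]
      have h1 : sInf A ≤ 120 * sInf B := Nat.sInf_le (hBA _ (Nat.sInf_mem hBne))
      have h2 : ((sInf A : ℕ) : ℝ) ≤ ((120 * sInf B : ℕ) : ℝ) := Nat.cast_le.2 h1
      push_cast at h2
      linarith
end
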